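/- For a circulant graph C_n(a_1,…,a_p) with n odd and a_p < n/2, the product of the nonzero Laplacian eigenvalues equals 2^{n−1} · Π_{j=1}^{(n−1)/2} ( p − Σ_{k=1}^p cos(2π j a_k / n) )^2, provided the graph is connected. -/

import Mathlib

open Polynomial Real

open scoped Classical in
/-- The combinatorial Laplacian of the circulant graph `C_n(a_1, …, a_p)`,
on vertex set `ZMod n`: vertices `u, v` are adjacent iff `u - v ≡ ±a_k (mod n)`. -/
noncomputable def lapCirculant (n p : ℕ) [NeZero n] (a : Fin p → ℕ) :
    Matrix (ZMod n) (ZMod n) ℝ :=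
  fun u v =>
    if u = v then 2 * p
    else if ∃ k, u - v = (a k : ZMod n) ∨ v - u = (a k : ZMod n) then -1 else 0

noncomputable section CircAux

namespace CircAux

variable {n : ℕ} [NeZero n]

def zet (n : ℕ) : ℂ := Complex.exp (2 * Real.pi * Complex.I / n)

lemma zet_prim (n : ℕ) [NeZero n] : IsPrimitiveRoot (zet n) n :=
  Complex.isPrimitiveRoot_exp n (NeZero.ne n)

lemma zet_pow_mod (m : ℕ) : zet n ^ (m % n) = zet n ^ m := by
  conv_rhs => rw [← Nat.div_add_mod m n]
  rw [pow_add, pow_mul, (zet_prim n).pow_eq_one, one_pow, one_mul]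

def ee (n : ℕ) [NeZero n] (t : ZMod n) : ℂ := zet n ^ t.val

lemma ee_add (s t : ZMod n) : ee n (s + t) = ee n s * ee n t := by
  rw [ee, ee, ee, ZMod.val_add, zet_pow_mod, pow_add]

lemma ee_zero : ee n 0 = 1 := by simp [ee]

lemma ee_natCast (m : ℕ) : ee n (m : ZMod n) = zet n ^ m := by
  rw [ee, ZMod.val_natCast, zet_pow_mod]

lemma ee_mul_ee_neg (s : ZMod n) : ee n s * ee n (-s) = 1 := by
  rw [← ee_add, add_neg_cancel, ee_zero]

lemma ee_natCast_exp (m : ℕ) :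
    ee n (m : ZMod n) = Complex.exp ((2 * Real.pi * m / n : ℝ) * Complex.I) := by
  rw [ee_natCast, zet, ← Complex.exp_nat_mul]
  congr 1
  push_cast
  ring

lemma ee_add_ee_neg (m : ℕ) :
    ee n (m : ZMod n) + ee n (-(m : ZMod n)) =
      ((2 * Real.cos (2 * Real.pi * m / n) : ℝ) : ℂ) := by
  set θ : ℝ := 2 * Real.pi * m / n with hθ
  have hx : ee n (m : ZMod n) = Complex.exp ((θ : ℂ) * Complex.I) := ee_natCast_exp m
  have hneg : ee n (-(m : ZMod n)) = Complex.exp (((-θ : ℝ) : ℂ) * Complex.I) := by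
    have h1 := ee_mul_ee_neg (n := n) (m : ZMod n)
    rw [hx] at h1
    rw [eq_inv_of_mul_eq_one_right h1, ← Complex.exp_neg]
    congr 1
    push_cast
    ring
  rw [hx, hneg, Complex.exp_mul_I, Complex.exp_mul_I]
  push_cast
  simp [Complex.cos_neg, Complex.sin_neg, Complex.ofReal_cos]
  ring


def fourier (n : ℕ) [NeZero n] : Matrix (ZMod n) (ZMod n) ℂ :=
  Matrix.of fun u j => ee n (u * j)

def zmodFinEquiv (n : ℕ) [NeZero n] : Fin n ≃ ZMod n where
  toFun i := (i : ℕ)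
  invFun z := ⟨z.val, z.val_lt⟩
  left_inv i := by
    ext
    exact ZMod.val_natCast_of_lt i.isLt
  right_inv z := by
    simp [ZMod.natCast_val, ZMod.cast_id]

lemma fourier_eq :
    fourier n = Matrix.reindex (zmodFinEquiv n) (zmodFinEquiv n)
      (Matrix.vandermonde fun i : Fin n => zet n ^ (i : ℕ)) := by
  ext u j
  simp only [fourier, Matrix.of_apply, Matrix.reindex_apply, Matrix.submatrix_apply,
    Matrix.vandermonde_apply, zmodFinEquiv, Equiv.coe_fn_symm_mk]
  rw [ee, ZMod.val_mul, zet_pow_mod, pow_mul]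

lemma det_fourier_ne_zero : (fourier n).det ≠ 0 := by
  rw [fourier_eq, Matrix.det_reindex_self]
  rw [Matrix.det_vandermonde_ne_zero_iff]
  intro i j hij
  exact Fin.ext ((zet_prim n).pow_inj i.isLt j.isLt hij)

lemma det_circulant_aux (c : ZMod n → ℂ) (hc : ∀ t, c (-t) = c t) :
    (Matrix.of fun u v : ZMod n => c (u - v)).det
      = ∏ j : ZMod n, ∑ t : ZMod n, c t * ee n (t * j) := by
  classical
  have hMF : (Matrix.of fun u v : ZMod n => c (u - v)) * fourier n
      = fourier n * Matrix.diagonal (fun j => ∑ t : ZMod n, c t * ee n (t * j)) := by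
    ext u j
    rw [Matrix.mul_apply, Matrix.mul_diagonal]
    have step1 : ∑ v : ZMod n, c (u - v) * ee n (v * j)
        = ∑ t : ZMod n, c t * ee n ((u - t) * j) := by
      refine (Fintype.sum_equiv (Equiv.subLeft u) _ _ ?_).symm
      intro t
      simp [Equiv.subLeft, sub_sub_cancel]
    have step2 : ∀ t : ZMod n, ee n ((u - t) * j) = ee n (u * j) * ee n (-(t * j)) := by
      intro t
      rw [← ee_add]
      congr 1
      ring
    have step3 : ∑ t : ZMod n, c t * ee n (-(t * j)) = ∑ t : ZMod n, c t * ee n (t * j) := by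
      refine Fintype.sum_equiv (Equiv.neg (ZMod n)) _ _ ?_
      intro t
      simp only [Equiv.neg_apply]
      rw [hc, neg_mul]
    calc ∑ v : ZMod n, c (u - v) * fourier n v j
        = ∑ t : ZMod n, c t * (ee n (u * j) * ee n (-(t * j))) := by
          rw [show (fun v => c (u - v) * fourier n v j) = fun v => c (u - v) * ee n (v * j) from rfl]
          rw [step1]
          exact Finset.sum_congr rfl fun t _ => by rw [step2]
      _ = ee n (u * j) * ∑ t : ZMod n, c t * ee n (-(t * j)) := by
          rw [Finset.mul_sum]
          exact Finset.sum_congr rfl fun t _ => by ring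
      _ = fourier n u j * ∑ t : ZMod n, c t * ee n (t * j) := by rw [step3]; rfl
  have hdet := congrArg Matrix.det hMF
  rw [Matrix.det_mul, Matrix.det_mul, Matrix.det_diagonal, mul_comm (fourier n).det] at hdet
  exact mul_right_cancel₀ det_fourier_ne_zero hdet


lemma eval_charpoly {m : Type*} [Fintype m] [DecidableEq m] (M : Matrix m m ℝ) (x : ℝ) :
    M.charpoly.eval x = (Matrix.of fun i j => (if i = j then x else 0) - M i j).det := by
  rw [Matrix.charpoly, ← Polynomial.coe_evalRingHom, RingHom.map_det]
  congr 1
  ext i j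
  by_cases h : i = j <;>
    simp [Matrix.charmatrix_apply, h, Matrix.diagonal]


open scoped Classical

variable (p : ℕ) (a : Fin p → ℕ)

/-- the symbol of `x • 1 - L`, as a function on `ZMod n`. -/
noncomputable def csym (x : ℝ) : ZMod n → ℂ := fun t =>
  if t = 0 then (x : ℂ) - 2 * p
  else if ∃ k, t = (a k : ZMod n) ∨ -t = (a k : ZMod n) then 1 else 0

section hyp

variable {p} {a}
variable (hA : ∀ k, (a k : ZMod n) ≠ 0)
    (hB : ∀ k l, (a k : ZMod n) ≠ -(a l : ZMod n))
    (hC : ∀ k l, (a k : ZMod n) = (a l : ZMod n) → k = l)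

include hA hB hC in
lemma csym_eq (x : ℝ) (t : ZMod n) :
    csym p a x t = (if t = 0 then (x : ℂ) - 2 * p else 0)
      + ∑ k, ((if t = (a k : ZMod n) then 1 else 0)
          + (if t = (-(a k : ZMod n)) then (1 : ℂ) else 0)) := by
  by_cases h0 : t = 0
  · subst h0
    rw [csym, if_pos rfl, if_pos rfl]
    have : ∀ k : Fin p, ((if (0 : ZMod n) = (a k : ZMod n) then (1:ℂ) else 0)
        + (if (0 : ZMod n) = (-(a k : ZMod n)) then (1:ℂ) else 0)) = 0 := by
      intro k
      rw [if_neg (fun h => hA k h.symm), if_neg, add_zero]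
      intro h
      exact hA k (by rw [← neg_neg ((a k : ZMod n)), ← h, neg_zero])
    rw [Finset.sum_congr rfl (fun k _ => this k), Finset.sum_const_zero, add_zero]
  · rw [csym, if_neg h0, if_neg h0, zero_add]
    by_cases hex : ∃ k, t = (a k : ZMod n) ∨ -t = (a k : ZMod n)
    · rw [if_pos hex]
      obtain ⟨k₀, hk₀⟩ := hex
      rw [Finset.sum_eq_single k₀]
      · rcases hk₀ with h | h
        · have e2 : t ≠ -(a k₀ : ZMod n) := fun h2 => hB k₀ k₀ (h.symm.trans h2)
          rw [if_pos h, if_neg e2, add_zero]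
        · have ht : t = -(a k₀ : ZMod n) := by rw [← h, neg_neg]
          have e1 : t ≠ (a k₀ : ZMod n) := fun h2 => hB k₀ k₀ (h2.symm.trans ht)
          rw [if_neg e1, if_pos ht, zero_add]
      · intro k _ hk
        rcases hk₀ with h | h
        · have e1 : t ≠ (a k : ZMod n) := fun h2 => hk (hC k k₀ (h2.symm.trans h))
          have e2 : t ≠ -(a k : ZMod n) := fun h2 => hB k₀ k (h.symm.trans h2)
          rw [if_neg e1, if_neg e2, add_zero]
        · have ht : t = -(a k₀ : ZMod n) := by rw [← h, neg_neg]
          have e1 : t ≠ (a k : ZMod n) := fun h2 => hB k k₀ (h2.symm.trans ht)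
          have e2 : t ≠ -(a k : ZMod n) :=
            fun h2 => hk (hC k k₀ (neg_injective (h2.symm.trans ht)))
          rw [if_neg e1, if_neg e2, add_zero]
      · intro h
        exact absurd (Finset.mem_univ k₀) h
    · rw [if_neg hex]
      symm
      rw [Finset.sum_eq_zero]
      intro k _
      rw [if_neg, if_neg, add_zero]
      · intro h2
        exact hex ⟨k, Or.inr (by rw [h2, neg_neg])⟩
      · intro h2
        exact hex ⟨k, Or.inl h2⟩

include hA hB hC in
lemma sum_csym (x : ℝ) (j : ZMod n) :
    ∑ t : ZMod n, csym p a x t * ee n (t * j)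
      = ((x - (2 * (p:ℝ) - 2 * ∑ k, Real.cos (2 * Real.pi * (j.val : ℝ) * (a k : ℝ) / n)) : ℝ) : ℂ) := by
  have hj : ((j.val : ℕ) : ZMod n) = j := ZMod.natCast_rightInverse j
  calc ∑ t : ZMod n, csym p a x t * ee n (t * j)
      = ∑ t : ZMod n, ((if t = 0 then (x : ℂ) - 2 * p else 0) * ee n (t * j)
          + ∑ k, ((if t = (a k : ZMod n) then 1 else 0) * ee n (t * j)
              + (if t = (-(a k : ZMod n)) then (1:ℂ) else 0) * ee n (t * j))) := by
        refine Finset.sum_congr rfl fun t _ => ?_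
        rw [csym_eq hA hB hC, add_mul, Finset.sum_mul]
        congr 1
        exact Finset.sum_congr rfl fun k _ => by rw [add_mul]
    _ = ((x : ℂ) - 2 * p) + ∑ k, (ee n ((a k : ZMod n) * j) + ee n (-((a k : ZMod n) * j))) := by
        rw [Finset.sum_add_distrib]
        congr 1
        · rw [Finset.sum_congr rfl (fun t _ => by rw [ite_mul, zero_mul]),
            Finset.sum_ite_eq' Finset.univ (0 : ZMod n), if_pos (Finset.mem_univ _),
            zero_mul, ee_zero, mul_one]
        · rw [Finset.sum_comm]
          refine Finset.sum_congr rfl fun k _ => ?_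
          rw [Finset.sum_add_distrib]
          congr 1
          · rw [Finset.sum_congr rfl (fun t _ => by rw [ite_mul, zero_mul]),
              Finset.sum_ite_eq' Finset.univ ((a k : ZMod n)), if_pos (Finset.mem_univ _), one_mul]
          · rw [Finset.sum_congr rfl (fun t _ => by rw [ite_mul, zero_mul]),
              Finset.sum_ite_eq' Finset.univ (-(a k : ZMod n)), if_pos (Finset.mem_univ _),
              one_mul, neg_mul]
    _ = ((x : ℂ) - 2 * p) + ∑ k, ((2 * Real.cos (2 * Real.pi * (j.val : ℝ) * (a k : ℝ) / n) : ℝ) : ℂ) := by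
        congr 1
        refine Finset.sum_congr rfl fun k _ => ?_
        have hcast : (a k : ZMod n) * j = ((a k * j.val : ℕ) : ZMod n) := by
          rw [Nat.cast_mul, hj]
        rw [hcast, ee_add_ee_neg]
        congr 2
        push_cast
        ring
    _ = _ := by
        have hre : x - (2 * (p:ℝ) - 2 * ∑ k, Real.cos (2 * Real.pi * (j.val : ℝ) * (a k : ℝ) / n))
            = (x - 2*p) + ∑ k, (2 * Real.cos (2 * Real.pi * (j.val : ℝ) * (a k : ℝ) / n)) := by
          rw [Finset.mul_sum]
          ring
        rw [hre, Complex.ofReal_add, Complex.ofReal_sum, Complex.ofReal_sub]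
        push_cast
        ring

include hA hB hC in
lemma charpoly_circ :
    (lapCirculant n p a).charpoly
      = ∏ j : ZMod n,
          (X - C (2 * (p:ℝ) - 2 * ∑ k, Real.cos (2 * Real.pi * (j.val : ℝ) * (a k : ℝ) / n))) := by
  apply Polynomial.funext
  intro x
  rw [eval_charpoly, Polynomial.eval_prod]
  simp only [Polynomial.eval_sub, Polynomial.eval_X, Polynomial.eval_C]
  apply Complex.ofReal_injective
  have hceven : ∀ t : ZMod n, csym p a x (-t) = csym p a x t := by
    intro t
    by_cases h : t = 0
    · rw [h, neg_zero]
    · rw [csym, csym, if_neg h, if_neg (neg_ne_zero.mpr h), neg_neg]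
      exact if_congr (exists_congr fun k => or_comm) rfl rfl
  have hmap : (Matrix.of fun i j => (if i = j then x else 0) - lapCirculant n p a i j).map
        (Complex.ofRealHom : ℝ →+* ℂ)
      = Matrix.of fun u v : ZMod n => csym p a x (u - v) := by
    ext u v
    simp only [Matrix.map_apply, Matrix.of_apply, lapCirculant, csym, Complex.ofRealHom_eq_coe]
    by_cases h : u = v
    · subst h
      simp only [sub_self, if_true, eq_self_iff_true, ite_true]
      push_cast
      ring
    · rw [if_neg h, if_neg (sub_ne_zero.mpr h), neg_sub]
      split_ifs with hcond <;> norm_num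
  have hdet2 : ((Matrix.of fun i j => (if i = j then x else 0) - lapCirculant n p a i j).det : ℂ)
      = ∏ j : ZMod n,
          ((x - (2 * (p:ℝ) - 2 * ∑ k, Real.cos (2 * Real.pi * (j.val : ℝ) * (a k : ℝ) / n)) : ℝ) : ℂ) := by
    rw [show (((Matrix.of fun i j => (if i = j then x else 0) - lapCirculant n p a i j).det : ℝ) : ℂ)
        = (Complex.ofRealHom : ℝ →+* ℂ)
            ((Matrix.of fun i j => (if i = j then x else 0) - lapCirculant n p a i j).det) from rfl,
      RingHom.map_det]
    rw [show (Complex.ofRealHom : ℝ →+* ℂ).mapMatrix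
          (Matrix.of fun i j => (if i = j then x else 0) - lapCirculant n p a i j)
        = Matrix.of fun u v : ZMod n => csym p a x (u - v) from hmap]
    rw [det_circulant_aux _ hceven]
    exact Finset.prod_congr rfl fun j _ => sum_csym hA hB hC x j
  rw [hdet2, ← Complex.ofReal_prod]

end hyp

end CircAux

/-- For the connected circulant graph `C_n(a_1,…,a_p)` with `n` odd and `a_p < n/2`,
the product of the nonzero Laplacian eigenvalues (with multiplicity) equals
`2^{n-1} · Π_{j=1}^{(n-1)/2} (p - Σ_k cos(2π j a_k/n))²`. -/
theorem prod_nonzero_eigenvalues_lapCirculant (n p : ℕ) [NeZero n] (hodd : Odd n)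
    (a : Fin p → ℕ) (hmono : StrictMono a) (hpos : ∀ k, 1 ≤ a k)
    (hlt : ∀ k, (a k : ℝ) < n / 2)
    (hconn : Nat.gcd n (Finset.univ.gcd a) = 1) :
    (((lapCirculant n p a).charpoly.roots).filter (· ≠ 0)).prod =
      2 ^ (n - 1) *
        ∏ j ∈ Finset.Icc 1 ((n - 1) / 2),
          ((p : ℝ) - ∑ k, Real.cos (2 * π * j * a k / n)) ^ 2 := by

  classical
  have hn0 : 0 < n := Nat.pos_of_ne_zero (NeZero.ne n)
  have hnR : (0:ℝ) < n := by exact_mod_cast hn0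
  have han : ∀ k, a k < n := by
    intro k
    have h1 : (a k : ℝ) < n := lt_trans (hlt k) (by linarith)
    exact_mod_cast h1
  have hab : ∀ k l, a k + a l < n := by
    intro k l
    have h1 : (a k : ℝ) + (a l : ℝ) < n := by linarith [hlt k, hlt l]
    exact_mod_cast h1
  have hA : ∀ k, (a k : ZMod n) ≠ 0 := by
    intro k h
    rw [ZMod.natCast_eq_zero_iff] at h
    exact absurd (Nat.le_of_dvd (hpos k) h) (not_le.mpr (han k))
  have hB : ∀ k l, (a k : ZMod n) ≠ -(a l : ZMod n) := by
    intro k l h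
    have h1 : ((a k + a l : ℕ) : ZMod n) = 0 := by
      push_cast
      rw [h]
      ring
    rw [ZMod.natCast_eq_zero_iff] at h1
    have h2 : 1 ≤ a k + a l := le_trans (hpos k) (Nat.le_add_right _ _)
    exact absurd (Nat.le_of_dvd h2 h1) (not_le.mpr (hab k l))
  have hC : ∀ k l, (a k : ZMod n) = (a l : ZMod n) → k = l := by
    intro k l h
    apply hmono.injective
    have := congrArg ZMod.val h
    rwa [ZMod.val_natCast_of_lt (han k), ZMod.val_natCast_of_lt (han l)] at this
  set ν : ℕ → ℝ := fun m =>
    2 * (p:ℝ) - 2 * ∑ k, Real.cos (2 * Real.pi * (m : ℝ) * (a k : ℝ) / n) with hνdef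
  -- the charpoly
  have hchar : (lapCirculant n p a).charpoly = ∏ j : ZMod n, (X - C (ν j.val)) :=
    CircAux.charpoly_circ hA hB hC
  -- roots
  have hroots : (lapCirculant n p a).charpoly.roots
      = Multiset.map (fun j : ZMod n => ν j.val) Finset.univ.val := by
    rw [hchar,
      show ∏ j : ZMod n, (X - C (ν j.val))
        = ((Multiset.map (fun j : ZMod n => ν j.val) Finset.univ.val).map
            fun r => X - C r).prod by rw [Multiset.map_map]; rfl,
      Polynomial.roots_multiset_prod_X_sub_C]
  -- zero eigenvalue characterization
  have hνzero : ∀ j : ZMod n, ν j.val = 0 ↔ j = 0 := by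
    intro j
    constructor
    · intro h0
      by_contra hj
      have hall : ∀ k, Real.cos (2 * Real.pi * (j.val : ℝ) * (a k : ℝ) / n) = 1 := by
        by_contra hnot
        push_neg at hnot
        obtain ⟨k₀, hk₀⟩ := hnot
        have hsum : ∑ k, Real.cos (2 * Real.pi * (j.val : ℝ) * (a k : ℝ) / n)
            < ∑ _k : Fin p, (1:ℝ) :=
          Finset.sum_lt_sum (fun k _ => Real.cos_le_one _)
            ⟨k₀, Finset.mem_univ _, lt_of_le_of_ne (Real.cos_le_one _) hk₀⟩
        rw [Finset.sum_const, Finset.card_univ, Fintype.card_fin, nsmul_eq_mul, mul_one] at hsum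
        have : ν j.val > 0 := by
          rw [hνdef]
          dsimp only
          linarith
        linarith [h0]
      have hdvd : ∀ k, n ∣ j.val * a k := by
        intro k
        have harg : (2 * Real.pi * (j.val : ℝ) * (a k : ℝ) / n)
            = 2 * Real.pi * ((j.val * a k : ℕ) : ℝ) / n := by
          push_cast
          ring
        obtain ⟨m, hm⟩ := (Real.cos_eq_one_iff _).mp (hall k)
        rw [harg] at hm
        have h2π : (2 * Real.pi) ≠ 0 := by positivity
        have hmn : (m : ℝ) = ((j.val * a k : ℕ) : ℝ) / n := by
          apply mul_right_cancel₀ h2π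
          rw [hm]
          ring
        have hmn2 : (m : ℝ) * n = ((j.val * a k : ℕ) : ℝ) := by
          rw [hmn]
          field_simp
        have hmn3 : m * (n:ℤ) = ((j.val * a k : ℕ) : ℤ) := by exact_mod_cast hmn2
        have : (n:ℤ) ∣ ((j.val * a k : ℕ) : ℤ) := ⟨m, by rw [← hmn3]; ring⟩
        exact_mod_cast this
      have hg : n ∣ j.val * Finset.univ.gcd a := by
        have h1 : n ∣ Finset.univ.gcd (fun k => j.val * a k) :=
          Finset.dvd_gcd fun k _ => hdvd k
        rwa [Finset.gcd_mul_left, normalize_eq] at h1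
      have hjv : j.val = 0 :=
        Nat.eq_zero_of_dvd_of_lt (Nat.Coprime.dvd_of_dvd_mul_right hconn hg) (ZMod.val_lt j)
      exact hj ((ZMod.val_eq_zero j).mp hjv)
    · intro h
      subst h
      rw [ZMod.val_zero, hνdef]
      dsimp only
      have h1 : ∀ k : Fin p, Real.cos (2 * Real.pi * ((0:ℕ):ℝ) * (a k : ℝ) / n) = 1 := by
        intro k
        norm_num
      rw [Finset.sum_congr rfl fun k _ => h1 k, Finset.sum_const, Finset.card_univ,
        Fintype.card_fin, nsmul_eq_mul, mul_one]
      ring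
  -- pass to a product over a Finset
  rw [hroots, Multiset.filter_map]
  have hfil : Multiset.filter ((fun r : ℝ => r ≠ 0) ∘ fun j : ZMod n => ν j.val) Finset.univ.val
      = (Finset.filter (fun j : ZMod n => j ≠ 0) Finset.univ).val := by
    rw [Finset.filter_val]
    apply Multiset.filter_congr
    intro j _
    exact not_congr (hνzero j)
  rw [hfil]
  have hprodfin : (Multiset.map (fun j : ZMod n => ν j.val)
        (Finset.filter (fun j : ZMod n => j ≠ 0) Finset.univ).val).prod
      = ∏ j ∈ Finset.filter (fun j : ZMod n => j ≠ 0) Finset.univ, ν j.val := rfl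
  rw [hprodfin]
  -- transfer to natural numbers
  set m₀ := (n - 1) / 2 with hm₀def
  obtain ⟨t, ht⟩ := hodd
  have h2m : 2 * m₀ = n - 1 := by omega
  have hstep1 : ∏ j ∈ Finset.filter (fun j : ZMod n => j ≠ 0) Finset.univ, ν j.val
      = ∏ m ∈ Finset.Ioc 0 (n - 1), ν m := by
    refine Finset.prod_nbij' (fun j => j.val) (fun m => (m : ZMod n)) ?_ ?_ ?_ ?_ ?_
    · intro j hj
      rw [Finset.mem_filter] at hj
      rw [Finset.mem_Ioc]
      have h1 : j.val ≠ 0 := fun h => hj.2 ((ZMod.val_eq_zero j).mp h)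
      have h2 := ZMod.val_lt j
      omega
    · intro m hm
      rw [Finset.mem_Ioc] at hm
      rw [Finset.mem_filter]
      refine ⟨Finset.mem_univ _, fun h => ?_⟩
      rw [ZMod.natCast_eq_zero_iff] at h
      have := Nat.le_of_dvd hm.1 h
      omega
    · intro j _
      exact ZMod.natCast_rightInverse j
    · intro m hm
      rw [Finset.mem_Ioc] at hm
      exact ZMod.val_natCast_of_lt (by omega)
    · intro j _
      rfl
  have hsym : ∀ m : ℕ, 0 < m → m ≤ n → ν (n - m) = ν m := by
    intro m h1 h2
    rw [hνdef]
    dsimp only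
    have h3 : ∀ k : Fin p, Real.cos (2 * Real.pi * ((n - m : ℕ) : ℝ) * (a k : ℝ) / n)
        = Real.cos (2 * Real.pi * (m : ℝ) * (a k : ℝ) / n) := by
      intro k
      rw [Nat.cast_sub h2]
      have hne : (n:ℝ) ≠ 0 := ne_of_gt hnR
      have harg : 2 * Real.pi * ((n:ℝ) - m) * (a k : ℝ) / n
          = (a k : ℕ) * (2 * Real.pi) - 2 * Real.pi * (m : ℝ) * (a k : ℝ) / n := by
        field_simp
      rw [harg]
      exact Real.cos_nat_mul_two_pi_sub _ (a k)
    rw [Finset.sum_congr rfl fun k _ => h3 k]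
  have hstep2 : ∏ m ∈ Finset.Ioc m₀ (n - 1), ν m = ∏ m ∈ Finset.Ioc 0 m₀, ν m := by
    refine Finset.prod_nbij' (fun m => n - m) (fun m => n - m) ?_ ?_ ?_ ?_ ?_
    · intro m hm
      rw [Finset.mem_Ioc] at hm ⊢
      omega
    · intro m hm
      rw [Finset.mem_Ioc] at hm ⊢
      omega
    · intro m hm
      rw [Finset.mem_Ioc] at hm
      omega
    · intro m hm
      rw [Finset.mem_Ioc] at hm
      omega
    · intro m hm
      rw [Finset.mem_Ioc] at hm
      exact (hsym m (by omega) (by omega)).symm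
  have hsplit : (∏ m ∈ Finset.Ioc 0 m₀, ν m) * ∏ m ∈ Finset.Ioc m₀ (n - 1), ν m
      = ∏ m ∈ Finset.Ioc 0 (n - 1), ν m :=
    Finset.prod_Ioc_consecutive _ (by omega) (by omega)
  have hfinal : ∏ m ∈ Finset.Ioc 0 (n - 1), ν m
      = 2 ^ (n - 1) * ∏ m ∈ Finset.Ioc 0 m₀,
          ((p : ℝ) - ∑ k, Real.cos (2 * Real.pi * (m : ℝ) * (a k : ℝ) / n)) ^ 2 := by
    rw [← hsplit, hstep2]
    have hν2 : ∀ m ∈ Finset.Ioc 0 m₀, ν m * ν m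
        = 4 * ((p : ℝ) - ∑ k, Real.cos (2 * Real.pi * (m : ℝ) * (a k : ℝ) / n)) ^ 2 := by
      intro m _
      rw [hνdef]
      dsimp only
      ring
    rw [← Finset.prod_mul_distrib, Finset.prod_congr rfl hν2, Finset.prod_mul_distrib,
      Finset.prod_const, Nat.card_Ioc, Nat.sub_zero]
    congr 1
    rw [show (4:ℝ) = 2^2 by norm_num, ← pow_mul, h2m]
  rw [hstep1, hfinal, show Finset.Icc 1 m₀ = Finset.Ioc 0 m₀ from Finset.Icc_add_one_left_eq_Ioc 0 m₀]


end CircAux
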